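/- Let 1 → H → G → Σ → 1 be exact with Σ finite of order N, and let φ : H → ℝ be a homogeneous quasi-homomorphism which is invariant under conjugation by all elements of G (φ(g⁻¹hg) = φ(h) for g ∈ G, h ∈ H). Then the function φ~ : G → ℝ defined by φ~(g) = φ(g^N)/N is a quasi-homomorphism extending φ. -/

import Mathlib

def QuasiHom {G : Type*} [Group G] (φ : G → ℝ) : Prop :=
  ∃ D : ℝ, ∀ x y : G, |φ (x * y) - φ x - φ y| ≤ D

def Homog {G : Type*} [Group G] (φ : G → ℝ) : Prop :=
  ∀ (g : G) (n : ℤ), φ (g ^ n) = (n : ℝ) * φ g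

def IsHomo {G : Type*} [Group G] (φ : G → ℝ) : Prop :=
  ∀ x y : G, φ (x * y) = φ x + φ y

theorem stmt6 {G : Type*} [Group G] (H : Subgroup G) [H.Normal]
    (N : ℕ) (hN : H.index = N) (hN0 : 0 < N)
    (hpow : ∀ g : G, g ^ N ∈ H)
    (φ : G → ℝ)
    (hdef : ∃ D : ℝ, ∀ h₁ ∈ H, ∀ h₂ ∈ H, |φ (h₁ * h₂) - φ h₁ - φ h₂| ≤ D)
    (hhom : ∀ h ∈ H, ∀ n : ℤ, φ (h ^ n) = (n : ℝ) * φ h)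
    (hinv : ∀ g : G, ∀ h ∈ H, φ (g⁻¹ * h * g) = φ h) :
    QuasiHom (fun g : G => φ (g ^ N) / N) ∧
    ∀ h ∈ H, φ (h ^ N) / N = φ h := by
  obtain ⟨D, hD⟩ := hdef
  have hD0 : (0:ℝ) ≤ D := le_trans (abs_nonneg _) (hD 1 H.one_mem 1 H.one_mem)
  have hNR : (0:ℝ) < N := by exact_mod_cast hN0
  set ψ : G → ℝ := fun g => φ (g ^ N) / N with hψ
  -- Lemma A : ψ extends φ on H
  have hA : ∀ h ∈ H, ψ h = φ h := by
    intro h hh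
    have h1 := hhom h hh (N : ℤ)
    rw [zpow_natCast] at h1
    simp only [hψ]
    rw [h1]
    field_simp
    push_cast; ring
  -- conjugation invariance helper : φ (a * h * a⁻¹) = φ h
  have hconj : ∀ a : G, ∀ h ∈ H, φ (a * h * a⁻¹) = φ h := by
    intro a h hh
    have := hinv a⁻¹ h hh
    rwa [inv_inv] at this
  -- key induction
  have key : ∀ n : ℕ, ∀ h ∈ H, ∀ a : G, ∃ c ∈ H,
      (h * a) ^ (n + 1) = c * a ^ (n + 1) ∧ |φ c - (n + 1 : ℝ) * φ h| ≤ (n : ℝ) * D := by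
    intro n
    induction n with
    | zero =>
      intro h hh a
      refine ⟨h, hh, by simp, ?_⟩
      simp
    | succ n ih =>
      intro h hh a
      obtain ⟨c, hc, heq, hb⟩ := ih h hh a
      refine ⟨c * (a ^ (n + 1) * h * (a ^ (n + 1))⁻¹),
        H.mul_mem hc (Subgroup.Normal.conj_mem ‹H.Normal› h hh (a ^ (n + 1))), ?_, ?_⟩
      · rw [pow_succ, heq]
        group
      · have h1 := hD c hc (a ^ (n + 1) * h * (a ^ (n + 1))⁻¹)
          (Subgroup.Normal.conj_mem ‹H.Normal› h hh (a ^ (n + 1)))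
        rw [hconj (a ^ (n + 1)) h hh] at h1
        have e1 : |φ (c * (a ^ (n + 1) * h * (a ^ (n + 1))⁻¹)) - ((n:ℝ) + 1 + 1) * φ h|
            ≤ |φ (c * (a ^ (n + 1) * h * (a ^ (n + 1))⁻¹)) - φ c - φ h|
              + |φ c - ((n:ℝ) + 1) * φ h| := by
          have := abs_add_le (φ (c * (a ^ (n + 1) * h * (a ^ (n + 1))⁻¹)) - φ c - φ h)
            (φ c - ((n:ℝ) + 1) * φ h)
          calc |φ (c * (a ^ (n + 1) * h * (a ^ (n + 1))⁻¹)) - ((n:ℝ) + 1 + 1) * φ h|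
              = |(φ (c * (a ^ (n + 1) * h * (a ^ (n + 1))⁻¹)) - φ c - φ h)
                + (φ c - ((n:ℝ) + 1) * φ h)| := by ring_nf
            _ ≤ _ := this
        push_cast
        push_cast at hb
        calc |φ (c * (a ^ (n + 1) * h * (a ^ (n + 1))⁻¹)) - ((n:ℝ) + 1 + 1) * φ h|
            ≤ |φ (c * (a ^ (n + 1) * h * (a ^ (n + 1))⁻¹)) - φ c - φ h|
              + |φ c - ((n:ℝ) + 1) * φ h| := e1
          _ ≤ D + (n : ℝ) * D := add_le_add h1 hb
          _ = ((n : ℝ) + 1) * D := by ring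
  -- Lemma B : |ψ (h * a) - φ h - ψ a| ≤ D  for h ∈ H
  have hB : ∀ h ∈ H, ∀ a : G, |ψ (h * a) - φ h - ψ a| ≤ D := by
    intro h hh a
    obtain ⟨m, hm⟩ : ∃ m : ℕ, N = m + 1 := ⟨N - 1, by omega⟩
    obtain ⟨c, hc, heq, hb⟩ := key m h hh a
    have hcm : (m : ℝ) + 1 = (N : ℝ) := by rw [hm]; push_cast; ring
    rw [hcm] at hb
    have h1 := hD c hc (a ^ N) (hpow a)
    have e : ψ (h * a) - φ h - ψ a
        = ((φ (c * a ^ N) - φ c - φ (a ^ N)) + (φ c - (N : ℝ) * φ h)) / N := by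
      have heq' : (h * a) ^ N = c * a ^ N := by rw [hm]; exact heq
      simp only [hψ]
      rw [heq']
      field_simp
      ring
    rw [e, abs_div, abs_of_pos hNR, div_le_iff₀ hNR]
    calc |(φ (c * a ^ N) - φ c - φ (a ^ N)) + (φ c - (N : ℝ) * φ h)|
        ≤ |φ (c * a ^ N) - φ c - φ (a ^ N)| + |φ c - (N : ℝ) * φ h| := abs_add_le _ _
      _ ≤ D + (m : ℝ) * D := add_le_add h1 hb
      _ ≤ D * N := by
          have : (m : ℝ) + 1 ≤ (N : ℝ) := le_of_eq hcm
          nlinarith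
  -- Lemma B' : |ψ (a * h) - ψ a - φ h| ≤ D
  have hB' : ∀ a : G, ∀ h ∈ H, |ψ (a * h) - ψ a - φ h| ≤ D := by
    intro a h hh
    have h1 := hB (a * h * a⁻¹) (Subgroup.Normal.conj_mem ‹H.Normal› h hh a) a
    rw [hconj a h hh] at h1
    have e : a * h * a⁻¹ * a = a * h := by group
    rw [e] at h1
    calc |ψ (a * h) - ψ a - φ h| = |ψ (a * h) - φ h - ψ a| := by ring_nf
      _ ≤ D := h1
  constructor
  · -- QuasiHom
    have hfin : Finite (G ⧸ H) := Nat.finite_of_card_ne_zero (by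
      rw [show Nat.card (G ⧸ H) = H.index from rfl, hN]; omega)
    obtain ⟨M, hM⟩ := Finite.exists_le
      (fun p : (G ⧸ H) × (G ⧸ H) => |ψ (p.1.out * p.2.out) - ψ p.1.out - ψ p.2.out|)
    refine ⟨M + 4 * D, ?_⟩
    intro x y
    have tM := hM ((x : G ⧸ H), (y : G ⧸ H))
    simp only at tM
    set r₁ : G := (x : G ⧸ H).out with hr₁
    set r₂ : G := (y : G ⧸ H).out with hr₂
    have hx1 : r₁⁻¹ * x ∈ H := QuotientGroup.eq.mp (QuotientGroup.out_eq' (x : G ⧸ H))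
    have hy1 : r₂⁻¹ * y ∈ H := QuotientGroup.eq.mp (QuotientGroup.out_eq' (y : G ⧸ H))
    set h₁ : G := r₁⁻¹ * x with hh₁
    set h₂ : G := r₂⁻¹ * y with hh₂
    have hx : x = r₁ * h₁ := by rw [hh₁]; group
    have hy : y = r₂ * h₂ := by rw [hh₂]; group
    have tx := hB' r₁ h₁ hx1
    rw [← hx] at tx
    have ty := hB' r₂ h₂ hy1
    rw [← hy] at ty
    have hkm : r₂⁻¹ * h₁ * r₂ ∈ H := Subgroup.Normal.conj_mem' ‹H.Normal› h₁ hx1 r₂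
    have hk : (r₂⁻¹ * h₁ * r₂) * h₂ ∈ H := H.mul_mem hkm hy1
    have hxy : x * y = (r₁ * r₂) * ((r₂⁻¹ * h₁ * r₂) * h₂) := by
      rw [hx, hy]; group
    have t1 := hB' (r₁ * r₂) ((r₂⁻¹ * h₁ * r₂) * h₂) hk
    rw [← hxy] at t1
    have t2 := hD (r₂⁻¹ * h₁ * r₂) hkm h₂ hy1
    have t3 : φ (r₂⁻¹ * h₁ * r₂) = φ h₁ := hinv r₂ h₁ hx1
    rw [abs_le] at t1 t2 tx ty tM ⊢
    constructor <;> [linarith [t1.1, t2.1, tx.2, ty.2, tM.1, t3];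
      linarith [t1.2, t2.2, tx.1, ty.1, tM.2, t3]]
  · intro h hh
    exact hA h hh
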